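/- Let $R$ be a Noetherian ring, $M$ a torsion-free $R$-module, $V=\mathrm{Q}(R)\otimes_R M$, and $N$ an $R$-submodule of $V$ with $M\subseteq N$. If for all non-zerodivisors $a,b$ of $R$ with $\mathrm{ht}_R(a,b)\ge 2$ the sequence $a,b$ is $N$-regular, then $\widetilde{M}\subseteq N$, where $\widetilde{M}=\{f\in V\mid If\subseteq M\text{ for some ideal }I\text{ with }\mathrm{ht}_R I\ge 2\}$. -/

import Mathlib

open Pointwise

/-- The height of an ideal. -/
noncomputable def idealHt {R : Type*} [CommRing R] (I : Ideal R) : ℕ∞ :=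
  ⨅ p ∈ {p : PrimeSpectrum R | I ≤ p.asIdeal}, Order.height p

section Aux

variable {R : Type*} [CommRing R] {M : Type*} [AddCommGroup M] [Module R M]

/-- If `M` is torsion-free, so is its total localization. -/
lemma aux_smul_eq_zero
    (htf : ∀ r ∈ nonZeroDivisors R, Function.Injective fun x : M => r • x)
    {a : R} (ha : a ∈ nonZeroDivisors R) {x : LocalizedModule (nonZeroDivisors R) M}
    (h : a • x = 0) : x = 0 := by
  induction x using LocalizedModule.induction_on with
  | h m s =>
    rw [LocalizedModule.smul'_mk, ← LocalizedModule.zero_mk s, LocalizedModule.mk_eq] at h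
    obtain ⟨u, hu⟩ := h
    rw [smul_zero, smul_zero] at hu
    have hmem : ((u : R) * (s : R)) * a ∈ nonZeroDivisors R :=
      mul_mem (mul_mem u.2 s.2) ha
    have : (((u : R) * (s : R)) * a) • m = (((u : R) * (s : R)) * a) • (0 : M) := by
      rw [smul_zero, mul_smul, mul_smul]
      simpa [Submonoid.smul_def] using hu
    have := htf _ hmem this
    rw [this, LocalizedModule.zero_mk]

end Aux

theorem stmt6 {R : Type*} [CommRing R] [IsNoetherianRing R]
    {M : Type*} [AddCommGroup M] [Module R M]
    (htf : ∀ r ∈ nonZeroDivisors R, Function.Injective fun x : M => r • x)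
    (N : Submodule R (LocalizedModule (nonZeroDivisors R) M))
    (hMN : LinearMap.range (LocalizedModule.mkLinearMap (nonZeroDivisors R) M) ≤ N)
    (hreg : ∀ a b : R, a ∈ nonZeroDivisors R → b ∈ nonZeroDivisors R →
      2 ≤ idealHt (Ideal.span {a, b}) →
      (∀ x ∈ N, a • x = 0 → x = 0) ∧ (∀ x ∈ N, b • x ∈ a • N → x ∈ a • N)) :
    {f : LocalizedModule (nonZeroDivisors R) M | ∃ I : Ideal R, 2 ≤ idealHt I ∧ ∀ i ∈ I,
        i • f ∈ LinearMap.range (LocalizedModule.mkLinearMap (nonZeroDivisors R) M)} ⊆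
      ↑N := by
  classical
  intro f hf
  obtain ⟨I, hI2, hIf⟩ := hf
  set Φ := LocalizedModule.mkLinearMap (nonZeroDivisors R) M with hΦ
  -- the ideal of multipliers carrying `f` into `M`
  set J : Ideal R := Submodule.colon (LinearMap.range Φ) (Submodule.span R {f}) with hJdef
  have hmemJ : ∀ r : R, r ∈ J ↔ r • f ∈ LinearMap.range Φ := by
    intro r; rw [hJdef, Submodule.mem_colon]
    constructor
    · intro h; exact h f (Submodule.mem_span_singleton_self f)
    · rintro h y hy
      obtain ⟨a, rfl⟩ := Submodule.mem_span_singleton.mp hy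
      rw [smul_comm]; exact Submodule.smul_mem _ a h
  have hIJ : I ≤ J := fun i hi => (hmemJ i).mpr (hIf i hi)
  -- every prime over `J` has height at least 2
  have hJht : ∀ P : PrimeSpectrum R, J ≤ P.asIdeal → 2 ≤ Order.height P := by
    intro P hP
    refine hI2.trans ?_
    unfold idealHt
    exact iInf₂_le P (hIJ.trans hP)
  -- a representation of `f`
  obtain ⟨m, s, hfeq⟩ : ∃ (m : M) (s : nonZeroDivisors R), f = LocalizedModule.mk m s :=
    LocalizedModule.induction_on (fun m s => ⟨m, s, rfl⟩) f
  have hsJ : (s : R) ∈ J := by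
    rw [hmemJ]
    refine ⟨m, ?_⟩
    rw [hfeq, LocalizedModule.smul'_mk, hΦ, LocalizedModule.mkLinearMap_apply,
      ← Submonoid.smul_def, LocalizedModule.mk_cancel]
  -- Lasker decomposition of ⊥
  obtain ⟨t₀, ht₀, ht₀'⟩ := Ideal.isLasker R R ⊥
  obtain ⟨t, hts, htinf, htmin⟩ : ∃ t : Finset (Ideal R), t ⊆ t₀ ∧ t.inf id = ⊥ ∧
      ∀ ⦃J⦄, J ∈ t → ¬ (t.erase J).inf id ≤ J := Submodule.decomposition_erase_inf ht₀
  have htprimary : ∀ Q ∈ t, Q.IsPrimary := fun Q hQ => ht₀' (hts hQ)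
  -- elements outside all the radicals are nonzerodivisors
  have hnzd : ∀ b : R, (∀ Q ∈ t, b ∉ Q.radical) → b ∈ nonZeroDivisors R := by
    intro b hb
    rw [mem_nonZeroDivisors_iff_right]
    intro c hc
    by_contra hc0
    have hcnot : c ∉ Finset.inf t id := by
      rw [htinf]; simpa using hc0
    rw [Submodule.mem_finsetInf] at hcnot
    push_neg at hcnot
    obtain ⟨Q, hQt, hcQ⟩ := hcnot
    have hcb : c * b ∈ Q := by
      rw [hc]; exact Q.zero_mem
    rcases (Ideal.isPrimary_iff.mp (htprimary Q hQt)).2 hcb with h | h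
    · exact hcQ h
    · exact hb Q hQt h
  -- nonzerodivisors avoid all the radicals
  have hsnot : ∀ a : R, a ∈ nonZeroDivisors R → ∀ Q ∈ t, a ∉ Q.radical := by
    intro a ha Q hQ haQ
    obtain ⟨n, hn⟩ := haQ
    have hx := htmin hQ
    rw [SetLike.not_le_iff_exists] at hx
    obtain ⟨x, hx1, hx2⟩ := hx
    have hxz : a ^ n * x = 0 := by
      have hmem : a ^ n * x ∈ Finset.inf t id := by
        rw [Submodule.mem_finsetInf]
        intro Q' hQ'
        by_cases hQQ : Q' = Q
        · subst hQQ; exact Ideal.mul_mem_right _ _ hn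
        · have : x ∈ Q' := by
            have := Submodule.mem_finsetInf.mp hx1 Q' (Finset.mem_erase.mpr ⟨hQQ, hQ'⟩)
            exact this
          exact Ideal.mul_mem_left _ _ this
      rw [htinf] at hmem
      simpa using hmem
    have : x = 0 := mem_nonZeroDivisors_iff_right.mp (pow_mem ha n) x (by rwa [mul_comm])
    exact hx2 (by rw [this]; exact Q.zero_mem)
  -- the finite set of bad primes
  have hfinmin : ((Ideal.span {(s : R)}).minimalPrimes).Finite := by
    rw [Ideal.minimalPrimes_eq_comap]
    exact (minimalPrimes.finite_of_isNoetherianRing _).image _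
  have hUfin : {q : Ideal R | q ∈ (Ideal.span {(s : R)}).minimalPrimes ∧ ¬ J ≤ q}.Finite :=
    hfinmin.subset fun q hq => hq.1
  set bad : Finset (Ideal R) := t.image Ideal.radical ∪ hUfin.toFinset with hbad
  have hbadprime : ∀ P ∈ bad, P.IsPrime := by
    intro P hP
    rcases Finset.mem_union.mp hP with h | h
    · obtain ⟨Q, hQ, rfl⟩ := Finset.mem_image.mp h
      exact Ideal.isPrime_radical (htprimary Q hQ)
    · exact ((hUfin.mem_toFinset.mp h).1).1.1
  have hbadnotle : ∀ P ∈ bad, ¬ J ≤ P := by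
    intro P hP hle
    rcases Finset.mem_union.mp hP with h | h
    · obtain ⟨Q, hQ, rfl⟩ := Finset.mem_image.mp h
      exact hsnot (s : R) s.2 Q hQ (hle hsJ)
    · exact (hUfin.mem_toFinset.mp h).2 hle
  -- prime avoidance
  have havoid : ¬ ((J : Set R) ⊆ ⋃ P ∈ (bad : Set (Ideal R)), (P : Set R)) := by
    rw [Ideal.subset_union_prime ⊥ ⊥ (fun P hP _ _ => hbadprime P hP)]
    rintro ⟨P, hP, hle⟩
    exact hbadnotle P hP hle
  obtain ⟨b, hbJ, hbnot⟩ : ∃ b ∈ J, ∀ P ∈ bad, b ∉ P := by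
    rw [Set.not_subset] at havoid
    obtain ⟨b, hb1, hb2⟩ := havoid
    exact ⟨b, hb1, fun P hP hbP => hb2 (Set.mem_biUnion hP hbP)⟩
  have hbnzd : b ∈ nonZeroDivisors R := by
    refine hnzd b fun Q hQ h => ?_
    exact hbnot _ (Finset.mem_union_left _ (Finset.mem_image_of_mem _ hQ)) h
  -- the height of (s, b) is at least 2
  have hht : 2 ≤ idealHt (Ideal.span {(s : R), b}) := by
    unfold idealHt
    refine le_iInf₂ fun P hP => ?_
    have hsP : (s : R) ∈ P.asIdeal := hP (Ideal.subset_span (by simp))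
    have hbP : b ∈ P.asIdeal := hP (Ideal.subset_span (by simp))
    have hspanle : Ideal.span {(s : R)} ≤ P.asIdeal := by
      rw [Ideal.span_le]; simpa using hsP
    obtain ⟨q, hq, hqP⟩ := Ideal.exists_minimalPrimes_le (J := P.asIdeal) hspanle
    have hqprime : q.IsPrime := hq.1.1
    by_cases hJq : J ≤ q
    · have h2q : 2 ≤ Order.height (⟨q, hqprime⟩ : PrimeSpectrum R) := hJht _ hJq
      exact h2q.trans (Order.height_mono (show (⟨q, hqprime⟩ : PrimeSpectrum R) ≤ P from hqP))
    · have hbq : b ∉ q := hbnot q (Finset.mem_union_right _ (hUfin.mem_toFinset.mpr ⟨hq, hJq⟩))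
      have hsq : (s : R) ∈ q := hq.1.2 (Ideal.subset_span rfl)
      have hqltP : q < P.asIdeal := lt_of_le_of_ne hqP fun h => hbq (h ▸ hbP)
      obtain ⟨q0, hq0, hq0q⟩ := Ideal.exists_minimalPrimes_le (I := (⊥ : Ideal R)) (J := q) bot_le
      have hq0prime : q0.IsPrime := hq0.1.1
      have hsq0 : (s : R) ∉ q0 := by
        intro hs0
        have hinfle : Finset.inf t id ≤ q0 := by rw [htinf]; exact bot_le
        obtain ⟨Q, hQ, hQq0⟩ := hq0prime.inf_le'.mp hinfle
        have hradle : Q.radical ≤ q0 := by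
          have := Ideal.radical_mono hQq0
          rwa [hq0prime.radical] at this
        have hq0le : q0 ≤ Q.radical :=
          hq0.2 ⟨Ideal.isPrime_radical (htprimary Q hQ), bot_le⟩ hradle
        exact hsnot (s : R) s.2 Q hQ (hq0le hs0)
      have hq0ltq : q0 < q := lt_of_le_of_ne hq0q fun h => hsq0 (h ▸ hsq)
      -- build a chain of length 2 ending at P
      let x0 : PrimeSpectrum R := ⟨q0, hq0prime⟩
      let x1 : PrimeSpectrum R := ⟨q, hqprime⟩
      let c : LTSeries (PrimeSpectrum R) :=
        ((RelSeries.singleton _ x0).snoc x1 (show x0 < x1 from hq0ltq)).snoc P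
          (by simp only [RelSeries.last_snoc']; exact (show x1 < P from hqltP))
      have hlen : c.length = 2 := rfl
      have hlast : c.last = P := by simp [c]
      have := Order.length_le_height_last (p := c)
      rw [hlen, hlast] at this
      exact_mod_cast this
  -- use the regularity hypothesis
  obtain ⟨-, hreg2⟩ := hreg (s : R) b s.2 hbnzd hht
  have hxN : (s : R) • f ∈ N := hMN ((hmemJ _).mp hsJ)
  have hbfN : b • f ∈ N := hMN ((hmemJ _).mp hbJ)
  have hbx : b • ((s : R) • f) ∈ (s : R) • N := by
    rw [smul_comm]
    exact Submodule.smul_mem_pointwise_smul _ _ _ hbfN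
  have hin : (s : R) • f ∈ (s : R) • N := hreg2 _ hxN hbx
  rw [show ((s : R) • N : Submodule R _) = _ from rfl] at hin
  obtain ⟨n, hnN, hn⟩ : ∃ n ∈ N, (s : R) • n = (s : R) • f := by
    have : ((s : R) • f) ∈ ((s : R) • (N : Set (LocalizedModule (nonZeroDivisors R) M))) := by
      rwa [← Submodule.coe_pointwise_smul]
    obtain ⟨n, hn1, hn2⟩ := this
    exact ⟨n, hn1, hn2⟩
  have hzero : (s : R) • (f - n) = 0 := by
    rw [smul_sub, hn, sub_self]
  have := aux_smul_eq_zero htf s.2 hzero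
  have hfn : f = n := by
    have := sub_eq_zero.mp this
    exact this
  rw [hfn]; exact hnN
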